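/- For any finite product C = B_{n_1} ⋯ B_{n_k} and d = i(u⁻¹ - u), the scalar (1, d) · C · (1, 0)ᵀ is invariant under reversing the order of the factors: (1,d) B_{n_1}⋯B_{n_k} (1,0)ᵀ = (1,d) B_{n_k}⋯B_{n_1} (1,0)ᵀ. -/

import Mathlib

open Matrix

/-- The balanced q-integer `[n] = (u^n - u^{-n})/(u - u⁻¹)`, where `w` is the
inverse of `u - u⁻¹`. -/
def qint {R : Type*} [CommRing R] (u : Rˣ) (w : R) (n : ℤ) : R :=
  (((u ^ n : Rˣ) : R) - ((u ^ (-n) : Rˣ) : R)) * w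

/-- The matrix `B_n = [[[n], i·u^{-n}], [i·u^n, 0]]`. -/
def Bmat {R : Type*} [CommRing R] (i : R) (u : Rˣ) (w : R) (n : ℤ) :
    Matrix (Fin 2) (Fin 2) R :=
  !![qint u w n, i * ((u ^ (-n) : Rˣ) : R); i * ((u ^ n : Rˣ) : R), 0]

lemma Bmat_transpose {R : Type*} [CommRing R] (i : R) (u : Rˣ) (w : R) (n : ℤ) :
    (Bmat i u w n)ᵀ = !![qint u w n, i * ((u ^ n : Rˣ) : R); i * ((u ^ (-n) : Rˣ) : R), 0] := by
  ext a b
  fin_cases a <;> fin_cases b <;> rfl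

lemma Bmat_key {R : Type*} [CommRing R] (i : R) (u : Rˣ) (w : R)
    (hw : ((u : R) - ((u⁻¹ : Rˣ) : R)) * w = 1)
    (d : R) (hd : d = i * (((u⁻¹ : Rˣ) : R) - (u : R))) (n : ℤ) :
    (Bmat i u w n)ᵀ * !![1, d; d, 1] = !![1, d; d, 1] * Bmat i u w n := by
  subst hd
  rw [Bmat_transpose]
  ext a b
  fin_cases a <;> fin_cases b
  · simp [Bmat, qint, Matrix.mul_apply, Fin.sum_univ_two]; ring
  · simp [Bmat, qint, Matrix.mul_apply, Fin.sum_univ_two]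
    linear_combination (i * ((((u ^ n)⁻¹ : Rˣ) : R) - ((u ^ n : Rˣ) : R))) * hw
  · simp [Bmat, qint, Matrix.mul_apply, Fin.sum_univ_two]
    linear_combination (i * (((u ^ n : Rˣ) : R) - (((u ^ n)⁻¹ : Rˣ) : R))) * hw
  · simp [Bmat, qint, Matrix.mul_apply, Fin.sum_univ_two]; ring

lemma prod_key {R : Type*} [CommRing R] (i : R) (u : Rˣ) (w : R)
    (hw : ((u : R) - ((u⁻¹ : Rˣ) : R)) * w = 1)
    (d : R) (hd : d = i * (((u⁻¹ : Rˣ) : R) - (u : R))) (l : List ℤ) :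
    ((l.map (Bmat i u w)).prod)ᵀ * !![1, d; d, 1]
      = !![1, d; d, 1] * ((l.reverse.map (Bmat i u w)).prod) := by
  induction l with
  | nil => simp
  | cons a t ih =>
    simp only [List.map_cons, List.prod_cons, List.reverse_cons, List.map_append,
      List.prod_append, List.map_cons, List.prod_cons, List.map_nil, List.prod_nil, mul_one,
      Matrix.transpose_mul]
    rw [Matrix.mul_assoc, Bmat_key i u w hw d hd, ← Matrix.mul_assoc, ih, Matrix.mul_assoc]

theorem stmt11 {R : Type*} [CommRing R] (i : R) (hi : i ^ 2 = -1)
    (u : Rˣ) (w : R) (hw : ((u : R) - ((u⁻¹ : Rˣ) : R)) * w = 1)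
    (d : R) (hd : d = i * (((u⁻¹ : Rˣ) : R) - (u : R))) (l : List ℤ) :
    dotProduct ![1, d] (((l.map (Bmat i u w)).prod).mulVec ![1, 0])
      = dotProduct ![1, d]
          (((l.reverse.map (Bmat i u w)).prod).mulVec ![1, 0]) := by
  have h := prod_key i u w hw d hd l
  have h00 := congrFun (congrFun h 0) 0
  simp [Matrix.mul_apply, Fin.sum_univ_two] at h00
  simp [dotProduct, Matrix.mulVec, Fin.sum_univ_two]
  linear_combination h00
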